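/- Consider the δ-implementability dual LP for action a_i: maximize Σ_{i'≠i} λ_{i'}(c_i − c_{i'}) subject to (1+δ)·q_{i,S}·Σ_{i'≠i} λ_{i'} ≤ Σ_{i'≠i} λ_{i'}·q_{i',S} for all S with q_{i,S} > 0, and λ_{i'} ≥ 0. For δ > 0, the only feasible solution is λ_{i'} = 0 for all i'. Consequently (by LP duality), every action can be δ-implemented up to tie-breaking for every δ > 0. -/

import Mathlib

theorem stmt_16 {Ω ι : Type*} [Fintype Ω] [Fintype ι]
    (qi : Ω → ℝ) (q' : ι → Ω → ℝ) (δ : ℝ) (hδ : 0 < δ)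
    (hqi : ∀ S, 0 ≤ qi S) (hqisum : ∑ S : Ω, qi S = 1)
    (hq' : ∀ i' S, 0 ≤ q' i' S) (hq'sum : ∀ i', ∑ S : Ω, q' i' S = 1)
    (lam : ι → ℝ) (hlam : ∀ i', 0 ≤ lam i')
    (hfeas : ∀ S : Ω, 0 < qi S →
      (1 + δ) * qi S * (∑ i', lam i') ≤ ∑ i', lam i' * q' i' S) :
    ∀ i', lam i' = 0 := by
  set L := ∑ i', lam i' with hL
  have hLnn : 0 ≤ L := Finset.sum_nonneg fun i _ => hlam i
  have hall : ∀ S : Ω, (1 + δ) * qi S * L ≤ ∑ i', lam i' * q' i' S := by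
    intro S
    rcases eq_or_lt_of_le (hqi S) with h | h
    · rw [← h, mul_zero, zero_mul]
      exact Finset.sum_nonneg fun i _ => mul_nonneg (hlam i) (hq' i S)
    · exact hfeas S h
  have hsum : (1 + δ) * L ≤ L := by
    calc (1 + δ) * L = ∑ S : Ω, (1 + δ) * qi S * L := by
          rw [← Finset.sum_mul, ← Finset.mul_sum, hqisum, mul_one]
      _ ≤ ∑ S : Ω, ∑ i', lam i' * q' i' S :=
          Finset.sum_le_sum fun S _ => hall S
      _ = ∑ i', lam i' * ∑ S : Ω, q' i' S := by
          rw [Finset.sum_comm]; simp [Finset.mul_sum]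
      _ = L := by simp [hq'sum, hL]
  have hL0 : L = 0 := by nlinarith
  intro i'
  have := (Finset.sum_eq_zero_iff_of_nonneg (fun i _ => hlam i)).mp hL0
  exact this i' (Finset.mem_univ i')
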